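/- For integers l ≥ 1, s ≥ 2, m ≥ 0, and all integers p, q with 1 ≤ p, q ≤ l+1, one has I_{p,q} = J_{p,q}. -/

import Mathlib

open scoped BigOperators

/-- The multiple zeta value of an index `k = (k₁, …, k_r)`:
`ζ(k₁,…,k_r) = Σ_{1 ≤ m₁ < ⋯ < m_r} 1/(m₁^{k₁} ⋯ m_r^{k_r})`,
written as a `tsum` over strictly increasing tuples of positive integers. -/
noncomputable def mzv (k : List ℕ) : ℝ :=
  ∑' f : {f : Fin k.length → ℕ+ // StrictMono f},
    ∏ i : Fin k.length, (1 : ℝ) / (((f.1 i : ℕ) : ℝ) ^ (k.get i))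

/-- Formal ℚ-linear combinations of indices. -/
abbrev IndexSum := List ℕ →₀ ℚ

/-- An index viewed as a formal sum. -/
noncomputable def ofIdx (k : List ℕ) : IndexSum := Finsupp.single k 1

/-- ζ extended ℚ-linearly to formal sums of indices. -/
noncomputable def mzvL (x : IndexSum) : ℝ := x.sum fun k c => (c : ℝ) * mzv k

/-- The Ohno sum `O_m(k) = Σ_{|e| = m} ζ(k ⊕ e)`. -/
noncomputable def ohno (m : ℕ) (k : List ℕ) : ℝ :=
  ∑ e ∈ Finset.Nat.antidiagonalTuple k.length m,
    mzv (List.ofFn fun i : Fin k.length => k.get i + e i)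

/-- The Ohno sum extended ℚ-linearly to formal sums of indices. -/
noncomputable def ohnoL (m : ℕ) (x : IndexSum) : ℝ := x.sum fun k c => (c : ℝ) * ohno m k

/-- The multiset of shuffles of two lists. -/
def shuffles : List ℕ → List ℕ → Multiset (List ℕ)
  | [], l => {l}
  | a :: k, [] => {a :: k}
  | a :: k, b :: l =>
      ((shuffles k (b :: l)).map (a :: ·)) + ((shuffles (a :: k) l).map (b :: ·))
  termination_by k l => k.length + l.length

/-- The shuffle product of two indices, as a formal sum of indices. -/
noncomputable def shufL (k l : List ℕ) : IndexSum := ((shuffles k l).map ofIdx).sum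

/-- The shuffle product, extended ℚ-bilinearly to formal sums of indices. -/
noncomputable def shuf (x y : IndexSum) : IndexSum :=
  x.sum fun k c => y.sum fun l d => (c * d) • shufL k l

/-- Encoding of an index as a binary word: an entry `a` becomes the block
`false, true, …, true` with `a - 1` trues. -/
def encodeIdx (k : List ℕ) : List Bool := k.flatMap fun a => false :: List.replicate (a - 1) true

/-- Auxiliary decoder. -/
def decodeAux : List Bool → ℕ → List ℕ
  | [], n => [n]
  | false :: w, n => n :: decodeAux w 1
  | true :: w, n => decodeAux w (n + 1)

/-- Decoding of a binary word into an index. -/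
def decodeIdx : List Bool → List ℕ
  | [] => []
  | _ :: w => decodeAux w 1

/-- The dual index `k†`: reverse the binary word of `k` and swap the letters. -/
def dualIdx (k : List ℕ) : List ℕ := decodeIdx (((encodeIdx k).reverse).map (fun b => !b))

/-- Duality extended termwise to formal sums of indices. -/
noncomputable def dualL (x : IndexSum) : IndexSum := Finsupp.mapDomain dualIdx x

/-- `(a) ⊛ (l₁,…,l_r) = Σ_{i=1}^{r} (l₁,…,l_{i-1}, l_i + a, l_{i+1},…,l_r)`. -/
noncomputable def hastIdx (a : ℕ) (l : List ℕ) : IndexSum :=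
  ∑ i : Fin l.length, Finsupp.single (l.set i (l.get i + a)) 1

/-- `⊛` extended ℚ-linearly in the second argument. -/
noncomputable def hast (a : ℕ) (x : IndexSum) : IndexSum := x.sum fun l c => c • hastIdx a l

/-- `Σ_{|e| = m} ζ((a) ⊛ (x ⊕ e))`, where for each index occurring in `x` the
sequence `e` of nonnegative integers runs over the suitable depth (the depth of
that index) with entry sum `m`, and `⊕ e` is applied termwise. -/
noncomputable def zetaHastSum (a m : ℕ) (x : IndexSum) : ℝ :=
  x.sum fun k c => (c : ℝ) *
    ∑ e ∈ Finset.Nat.antidiagonalTuple k.length m,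
      mzvL (hastIdx a (List.ofFn fun i : Fin k.length => k.get i + e i))

/-- Appending an entry `a` to each index occurring in a formal sum. -/
noncomputable def appendL (x : IndexSum) (a : ℕ) : IndexSum :=
  Finsupp.mapDomain (fun k => k ++ [a]) x

/-- `F_{m,l}(s; k) = O_m((s) ⧢ k ⧢ ({2}^l)) − O_m((s) ⧢ (k ⧢ ({2}^l))†)`. -/
noncomputable def F (m l s : ℕ) (k : List ℕ) : ℝ :=
  ohnoL m (shuf (ofIdx [s]) (shufL k (List.replicate l 2)))
    - ohnoL m (shuf (ofIdx [s]) (dualL (shufL k (List.replicate l 2))))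

/-- `D_{m,l}(s,t) = F_{m,l}(s;(t+1)) − F_{m,l}(t;(s+1))`. -/
noncomputable def D (m l s t : ℕ) : ℝ := F m l s [t + 1] - F m l t [s + 1]

def ins {n : ℕ} (c : Fin (n+1)) (x : ℕ) (f : Fin n → ℕ) : Fin (n+1) → ℕ :=
  fun i => if h : (i:ℕ) < (c:ℕ) then f ⟨i, by omega⟩
    else if h2 : (i:ℕ) = (c:ℕ) then x
    else f ⟨(i:ℕ) - 1, by have := i.isLt; have := c.isLt; omega⟩

def del {n : ℕ} (c : Fin (n+1)) (e : Fin (n+1) → ℕ) : Fin n → ℕ :=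
  fun i => if h : (i:ℕ) < (c:ℕ) then e ⟨i, by omega⟩ else e ⟨(i:ℕ)+1, by omega⟩

lemma succAbove_val {n : ℕ} (c : Fin (n+1)) (j : Fin n) :
    ((c.succAbove j) : ℕ) = if (j:ℕ) < (c:ℕ) then (j:ℕ) else (j:ℕ)+1 := by
  rw [Fin.succAbove]
  rcases lt_or_ge ((j:ℕ)) ((c:ℕ)) with h | h
  · rw [if_pos (by simpa [Fin.lt_def] using h), if_pos (by simpa [Fin.lt_def] using h)]; rfl
  · rw [if_neg (by simp [Fin.lt_def]; omega), if_neg (by omega)]; rfl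

lemma ins_succAbove {n : ℕ} (c : Fin (n+1)) (x : ℕ) (f : Fin n → ℕ) (j : Fin n) :
    ins c x f (c.succAbove j) = f j := by
  have hv := succAbove_val c j
  rcases lt_or_ge ((j:ℕ)) ((c:ℕ)) with h | h
  · have hv' : ((c.succAbove j):ℕ) = (j:ℕ) := by rw [hv, if_pos h]
    unfold ins
    rw [dif_pos (by omega)]
    congr 1; ext; simp [hv']
  · have hv' : ((c.succAbove j):ℕ) = (j:ℕ)+1 := by rw [hv, if_neg (by omega)]
    unfold ins
    rw [dif_neg (by omega), dif_neg (by omega)]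
    congr 1; ext; simp [hv']

lemma ins_same {n : ℕ} (c : Fin (n+1)) (x : ℕ) (f : Fin n → ℕ) : ins c x f c = x := by
  unfold ins; rw [dif_neg (by omega), dif_pos rfl]

lemma del_succAbove {n : ℕ} (c : Fin (n+1)) (e : Fin (n+1) → ℕ) (j : Fin n) :
    del c e j = e (c.succAbove j) := by
  have hv := succAbove_val c j
  unfold del
  rcases lt_or_ge ((j:ℕ)) ((c:ℕ)) with h | h
  · rw [dif_pos h]; congr 1; ext; rw [hv, if_pos h]
  · rw [dif_neg (by omega)]; congr 1; ext; rw [hv, if_neg (by omega)]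

lemma sum_ins {n : ℕ} (c : Fin (n+1)) (x : ℕ) (f : Fin n → ℕ) :
    ∑ i, ins c x f i = x + ∑ i, f i := by
  rw [Fin.sum_univ_succAbove _ c, ins_same]
  exact congrArg _ (Finset.sum_congr rfl fun j _ => ins_succAbove c x f j)

lemma sum_del {n : ℕ} (c : Fin (n+1)) (e : Fin (n+1) → ℕ) :
    e c + ∑ i, del c e i = ∑ i, e i := by
  rw [Fin.sum_univ_succAbove e c]
  exact congrArg _ (Finset.sum_congr rfl fun j _ => del_succAbove c e j)

lemma ins_del {n : ℕ} (c : Fin (n+1)) (e : Fin (n+1) → ℕ) :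
    ins c (e c) (del c e) = e := by
  funext i
  simp only [ins, del]
  split_ifs <;> first
    | rfl
    | omega
    | (congr 1; ext; simp at * <;> omega)

lemma del_ins {n : ℕ} (c : Fin (n+1)) (x : ℕ) (f : Fin n → ℕ) :
    del c (ins c x f) = f := by
  funext i
  simp only [ins, del]
  split_ifs <;> first
    | rfl
    | omega
    | (congr 1; ext; simp at * <;> omega)

lemma sum_update_nat {n : ℕ} (f : Fin n → ℕ) (i : Fin n) (v : ℕ) :
    (∑ k, Function.update f i v k) + f i = v + ∑ k, f k := by
  rw [Finset.sum_update_of_mem (Finset.mem_univ i)]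
  have h2 : f i + ∑ x ∈ Finset.univ.erase i, f x = ∑ k, f k :=
    Finset.add_sum_erase _ f (Finset.mem_univ i)
  have h3 : (Finset.univ \ {i} : Finset (Fin n)) = Finset.univ.erase i := by
    ext; simp [Finset.mem_erase, and_comm]
  rw [h3]; omega

lemma update_val {n : ℕ} (f : Fin n → ℕ) (i j : Fin n) (v : ℕ) :
    Function.update f i v j = if (j:ℕ) = (i:ℕ) then v else f j := by
  split_ifs with h
  · rw [show j = i from Fin.ext h]; exact Function.update_self ..
  · exact Function.update_of_ne (fun hh => h (by rw [hh])) _ _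

lemma get5 (A B C x y i : ℕ) (h : i < A+1+B+1+C) :
    (List.replicate A (2:ℕ) ++ [x] ++ List.replicate B 2 ++ [y] ++ List.replicate C 2)[i]'(by simp; omega) =
    if i < A then 2 else if i = A then x else if i < A+1+B then 2 else if i = A+1+B then y else 2 := by
  simp only [List.getElem_append, List.length_append, List.length_replicate, List.length_cons,
    List.length_nil, List.getElem_replicate, List.getElem_cons, List.getElem_singleton]
  split_ifs <;> omega

lemma get3 (A C x i : ℕ) (h : i < A+1+C) :
    (List.replicate A (2:ℕ) ++ [x] ++ List.replicate C 2)[i]'(by simp; omega) =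
    if i < A then 2 else if i = A then x else 2 := by
  simp only [List.getElem_append, List.length_append, List.length_replicate, List.length_cons,
    List.length_nil, List.getElem_replicate, List.getElem_cons, List.getElem_singleton]
  split_ifs <;> omega

lemma get4 (A C x y i : ℕ) (h : i < A+2+C) :
    (List.replicate A (2:ℕ) ++ [x, y] ++ List.replicate C 2)[i]'(by simp; omega) =
    if i < A then 2 else if i = A then x else if i = A+1 then y else 2 := by
  simp only [List.getElem_append, List.length_append, List.length_replicate, List.length_cons,
    List.length_nil, List.getElem_replicate, List.getElem_cons, List.getElem_singleton]
  split_ifs <;> omega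

lemma lenR {L : ℕ} (F : Fin (L+1) → ℕ) (q u v : ℕ) (h1 : 1 ≤ q) (h2 : q ≤ L+1) :
    ((List.ofFn F).take (q-1) ++ [u, v] ++ (List.ofFn F).drop q).length = L + 2 := by
  simp; omega

lemma getR {L : ℕ} (F : Fin (L+1) → ℕ) (q u v i : ℕ) (h1 : 1 ≤ q) (h2 : q ≤ L+1) (h : i < L+2) :
    ((List.ofFn F).take (q-1) ++ [u, v] ++ (List.ofFn F).drop q)[i]'(by rw [lenR F q u v h1 h2]; omega) =
    if hlt : i < q-1 then F ⟨i, by omega⟩ else if i = q-1 then u else if i = q then v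
      else F ⟨i-1, by omega⟩ := by
  simp only [List.getElem_append, List.length_append, List.length_take, List.length_ofFn,
    List.length_cons, List.length_nil, List.getElem_take, List.getElem_cons, List.getElem_drop,
    List.getElem_ofFn]
  split_ifs <;> first
    | rfl
    | omega
    | (congr 1; ext; simp; omega)

lemma ohno_eq (k : List ℕ) (n m : ℕ) (hn : k.length = n) :
    ohno m k = ∑ e ∈ Finset.Nat.antidiagonalTuple n m,
      mzv (List.ofFn fun i : Fin n => k[(i:ℕ)]'(by omega) + e i) := by
  subst hn
  rfl

noncomputable section

def fwdE (l s : ℕ) (Qc : Fin (l+2)) (P' Q' : Fin (l+1)) (f : Fin (l+1) → ℕ) (t j : ℕ) :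
    Fin (l+2) → ℕ :=
  ins Qc j (Function.update (Function.update f Q' (f Q' - j)) P' (f P' - s - t))

def bckF (l s : ℕ) (Qc : Fin (l+2)) (P' Q' : Fin (l+1)) (a : ℕ) (e : Fin (l+2) → ℕ) :
    Fin (l+1) → ℕ :=
  Function.update (Function.update (del Qc e) Q' (e Qc + del Qc e Q')) P'
    (del Qc e P' + s + a)

lemma bckF_eval {l : ℕ} (s : ℕ) (Qc : Fin (l+2)) (P' Q' : Fin (l+1))
    (hPQ : (P':ℕ) ≠ (Q':ℕ)) (a : ℕ) (e : Fin (l+2) → ℕ) (i : Fin (l+1)) :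
    bckF l s Qc P' Q' a e i =
      del Qc e i + (if (i:ℕ) = (P':ℕ) then s + a else if (i:ℕ) = (Q':ℕ) then e Qc else 0) := by
  unfold bckF
  rw [update_val, update_val]
  split_ifs with h1 h2
  · rw [show i = P' from Fin.ext h1]; ring
  · rw [show i = Q' from Fin.ext h2]; omega
  · omega

lemma sum_bckF {l : ℕ} (s : ℕ) (Qc : Fin (l+2)) (P' Q' : Fin (l+1))
    (hPQ : (P':ℕ) ≠ (Q':ℕ)) (a : ℕ) (e : Fin (l+2) → ℕ) :
    (∑ i, bckF l s Qc P' Q' a e i) = s + a + ∑ i, e i := by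
  have h1 := sum_update_nat (Function.update (del Qc e) Q' (e Qc + del Qc e Q')) P'
    (del Qc e P' + s + a)
  have h2 : Function.update (del Qc e) Q' (e Qc + del Qc e Q') P' = del Qc e P' := by
    rw [update_val, if_neg hPQ]
  have h3 := sum_update_nat (del Qc e) Q' (e Qc + del Qc e Q')
  have h4 : e Qc + ∑ i, del Qc e i = ∑ i : Fin (l+2), e i := sum_del Qc e
  unfold bckF
  omega

lemma sum_fwdE {l : ℕ} (s : ℕ) (Qc : Fin (l+2)) (P' Q' : Fin (l+1))
    (hPQ : (P':ℕ) ≠ (Q':ℕ)) (f : Fin (l+1) → ℕ) (t j : ℕ) :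
    (∑ i, fwdE l s Qc P' Q' f t j i) + s + t
      = (f P' - s - t) + s + t + (f Q' - j) + j + (∑ i, f i) - f P' - f Q' := by
  have h1 : ∑ i : Fin (l+2), fwdE l s Qc P' Q' f t j i
      = j + ∑ i, (Function.update (Function.update f Q' (f Q' - j)) P' (f P' - s - t)) i :=
    sum_ins Qc j _
  have h2 := sum_update_nat (Function.update f Q' (f Q' - j)) P' (f P' - s - t)
  have h3 : (Function.update f Q' (f Q' - j)) P' = f P' := by rw [update_val, if_neg hPQ]
  have h4 := sum_update_nat f Q' (f Q' - j)
  have h5 : f P' ≤ ∑ i, f i := Finset.single_le_sum (fun i _ => Nat.zero_le _) (Finset.mem_univ P')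
  have h6 : f Q' ≤ ∑ i, f i := Finset.single_le_sum (fun i _ => Nat.zero_le _) (Finset.mem_univ Q')
  have h7 : f P' + f Q' ≤ ∑ i, f i := by
    have := Finset.add_sum_erase Finset.univ f (Finset.mem_univ P')
    have h8 : f Q' ≤ ∑ x ∈ Finset.univ.erase P', f x :=
      Finset.single_le_sum (fun i _ => Nat.zero_le _)
        (Finset.mem_erase.2 ⟨fun hh => hPQ (by rw [hh]), Finset.mem_univ _⟩)
    omega
  omega

lemma bckF_fwdE {l : ℕ} (s : ℕ) (Qc : Fin (l+2)) (P' Q' : Fin (l+1))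
    (hPQ : (P':ℕ) ≠ (Q':ℕ)) (f : Fin (l+1) → ℕ) (t j : ℕ)
    (hj : j ≤ f Q') (ht : t + s ≤ f P') :
    bckF l s Qc P' Q' t (fwdE l s Qc P' Q' f t j) = f := by
  have hd : del Qc (fwdE l s Qc P' Q' f t j)
      = Function.update (Function.update f Q' (f Q' - j)) P' (f P' - s - t) := del_ins ..
  have hQc : fwdE l s Qc P' Q' f t j Qc = j := ins_same ..
  funext i
  rw [bckF_eval _ _ _ _ hPQ, hd, hQc, update_val, update_val]
  split_ifs with h1 h2
  · rw [show i = P' from Fin.ext h1]; omega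
  · rw [show i = Q' from Fin.ext h2]; omega
  · omega

lemma fwdE_bckF {l : ℕ} (s : ℕ) (Qc : Fin (l+2)) (P' Q' : Fin (l+1))
    (hPQ : (P':ℕ) ≠ (Q':ℕ)) (a : ℕ) (e : Fin (l+2) → ℕ) :
    fwdE l s Qc P' Q' (bckF l s Qc P' Q' a e) a (e Qc) = e := by
  have hP : bckF l s Qc P' Q' a e P' = del Qc e P' + (s + a) := by
    rw [bckF_eval _ _ _ _ hPQ, if_pos rfl]
  have hQ : bckF l s Qc P' Q' a e Q' = del Qc e Q' + e Qc := by
    rw [bckF_eval _ _ _ _ hPQ, if_neg (Ne.symm hPQ), if_pos rfl]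
  have hX : Function.update (Function.update (bckF l s Qc P' Q' a e) Q'
        (bckF l s Qc P' Q' a e Q' - e Qc)) P' (bckF l s Qc P' Q' a e P' - s - a)
      = del Qc e := by
    funext i
    rw [update_val, update_val, hP, hQ]
    split_ifs with h1 h2
    · rw [show i = P' from Fin.ext h1]; omega
    · rw [show i = Q' from Fin.ext h2]; omega
    · rw [bckF_eval _ _ _ _ hPQ, if_neg h1, if_neg h2]; omega
  unfold fwdE
  rw [hX, ins_del]

end

lemma lenR2 {L : ℕ} (F : Fin (L+1) → ℕ) (Q u v : ℕ) (h2 : Q ≤ L) :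
    ((List.ofFn F).take Q ++ [u, v] ++ (List.ofFn F).drop (Q+1)).length = L + 2 := by
  simp; omega

lemma getR2 {L : ℕ} (F : Fin (L+1) → ℕ) (Q u v i : ℕ) (h2 : Q ≤ L) (h : i < L+2) :
    ((List.ofFn F).take Q ++ [u, v] ++ (List.ofFn F).drop (Q+1))[i]'(by rw [lenR2 F Q u v h2]; omega) =
    if hlt : i < Q then F ⟨i, by omega⟩ else if i = Q then u else if i = Q+1 then v
      else F ⟨i-1, by omega⟩ := by
  simp only [List.getElem_append, List.length_append, List.length_take, List.length_ofFn,
    List.length_cons, List.length_nil, List.getElem_take, List.getElem_cons, List.getElem_drop,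
    List.getElem_ofFn]
  split_ifs <;> first
    | rfl
    | omega
    | (congr 1; ext; simp; omega)

lemma core (l s m P Q : ℕ) (hP : P ≤ l) (hQ : Q ≤ l) (hPQ : P ≠ Q) (hs : 2 ≤ s)
    (K : ℕ → List ℕ) (hlen : ∀ a, (K a).length = l + 2)
    (hK : ∀ a, ∀ i : ℕ, ∀ h : i < l + 2, (K a)[i]'(by rw [hlen]; omega) =
      if i = Q then 1 else if i = (if P < Q then P else P + 1) then s + a + 2 else 2) :
    (∑ a ∈ Finset.range (m + 1), ohno (m - a) (K a)) =
    ∑ f ∈ Finset.Nat.antidiagonalTuple (l + 1) (m + s),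
      ((f ⟨P, by omega⟩ + 1 - s : ℕ) : ℝ) *
        ∑ j ∈ Finset.range (f ⟨Q, by omega⟩ + 1),
          mzv ((List.ofFn fun i : Fin (l + 1) => f i + 2).take Q ++
            [j + 1, f ⟨Q, by omega⟩ - j + 2] ++
            (List.ofFn fun i : Fin (l + 1) => f i + 2).drop (Q + 1)) := by
  have hQ2 : Q < l + 2 := by omega
  have hP1 : P < l + 1 := by omega
  have hQ1 : Q < l + 1 := by omega
  have hPQ' : (((⟨P, hP1⟩ : Fin (l+1))):ℕ) ≠ (((⟨Q, hQ1⟩ : Fin (l+1))):ℕ) := hPQ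
  -- expand LHS
  have hL : (∑ a ∈ Finset.range (m + 1), ohno (m - a) (K a)) =
      ∑ a ∈ Finset.range (m + 1), ∑ e ∈ Finset.Nat.antidiagonalTuple (l+2) (m - a),
        mzv (List.ofFn fun i : Fin (l+2) => (K a)[(i:ℕ)]'(by rw [hlen]; omega) + e i) :=
    Finset.sum_congr rfl fun a _ => ohno_eq (K a) (l+2) (m-a) (hlen a)
  rw [hL, Finset.sum_sigma']
  -- expand RHS
  have hR : ∀ f ∈ Finset.Nat.antidiagonalTuple (l + 1) (m + s),
      ((f ⟨P, by omega⟩ + 1 - s : ℕ) : ℝ) *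
        (∑ j ∈ Finset.range (f ⟨Q, by omega⟩ + 1),
          mzv ((List.ofFn fun i : Fin (l + 1) => f i + 2).take Q ++
            [j + 1, f ⟨Q, by omega⟩ - j + 2] ++
            (List.ofFn fun i : Fin (l + 1) => f i + 2).drop (Q + 1))) =
      ∑ x ∈ Finset.range (f (⟨P, hP1⟩ : Fin (l+1)) + 1 - s) ×ˢ Finset.range (f (⟨Q, hQ1⟩ : Fin (l+1)) + 1),
          mzv ((List.ofFn fun i : Fin (l + 1) => f i + 2).take Q ++
            [x.2 + 1, f (⟨Q, hQ1⟩ : Fin (l+1)) - x.2 + 2] ++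
            (List.ofFn fun i : Fin (l + 1) => f i + 2).drop (Q + 1)) := by
    intro f _
    rw [Finset.sum_product]
    dsimp only
    rw [Finset.sum_const, Finset.card_range, nsmul_eq_mul]
  rw [Finset.sum_congr rfl hR, Finset.sum_sigma']
  -- the bijection
  refine Finset.sum_nbij' (fun x => ⟨bckF l s (⟨Q, hQ2⟩ : Fin (l+2)) (⟨P, hP1⟩ : Fin (l+1)) (⟨Q, hQ1⟩ : Fin (l+1)) x.1 x.2, (x.1, x.2 (⟨Q, hQ2⟩ : Fin (l+2)))⟩)
    (fun y => ⟨y.2.1, fwdE l s (⟨Q, hQ2⟩ : Fin (l+2)) (⟨P, hP1⟩ : Fin (l+1)) (⟨Q, hQ1⟩ : Fin (l+1)) y.1 y.2.1 y.2.2⟩) ?_ ?_ ?_ ?_ ?_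
  · rintro ⟨a, e⟩ hx
    simp only [Finset.mem_sigma, Finset.mem_range, Finset.Nat.mem_antidiagonalTuple,
      Finset.mem_product] at hx ⊢
    obtain ⟨ha, he⟩ := hx
    have hs1 := sum_bckF s (⟨Q, hQ2⟩ : Fin (l+2)) (⟨P, hP1⟩ : Fin (l+1)) (⟨Q, hQ1⟩ : Fin (l+1)) hPQ' a e
    have hbP : bckF l s (⟨Q, hQ2⟩ : Fin (l+2)) (⟨P, hP1⟩ : Fin (l+1)) (⟨Q, hQ1⟩ : Fin (l+1)) a e (⟨P, hP1⟩ : Fin (l+1)) = del (⟨Q, hQ2⟩ : Fin (l+2)) e (⟨P, hP1⟩ : Fin (l+1)) + (s + a) := by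
      rw [bckF_eval _ _ _ _ hPQ', if_pos rfl]
    have hbQ : bckF l s (⟨Q, hQ2⟩ : Fin (l+2)) (⟨P, hP1⟩ : Fin (l+1)) (⟨Q, hQ1⟩ : Fin (l+1)) a e (⟨Q, hQ1⟩ : Fin (l+1)) = del (⟨Q, hQ2⟩ : Fin (l+2)) e (⟨Q, hQ1⟩ : Fin (l+1)) + e (⟨Q, hQ2⟩ : Fin (l+2)) := by
      rw [bckF_eval _ _ _ _ hPQ', if_neg (Ne.symm hPQ'), if_pos rfl]
    refine ⟨by omega, by omega, by omega⟩
  · rintro ⟨f, t, j⟩ hy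
    simp only [Finset.mem_sigma, Finset.mem_range, Finset.Nat.mem_antidiagonalTuple,
      Finset.mem_product] at hy ⊢
    obtain ⟨hf, ht, hj⟩ := hy
    have hfP : f (⟨P, hP1⟩ : Fin (l+1)) ≤ ∑ i, f i :=
      Finset.single_le_sum (fun i _ => Nat.zero_le _) (Finset.mem_univ (⟨P, hP1⟩ : Fin (l+1)))
    have hs1 := sum_fwdE s (⟨Q, hQ2⟩ : Fin (l+2)) (⟨P, hP1⟩ : Fin (l+1)) (⟨Q, hQ1⟩ : Fin (l+1)) hPQ' f t j
    constructor
    · omega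
    · omega
  · rintro ⟨a, e⟩ hx
    have := fwdE_bckF s (⟨Q, hQ2⟩ : Fin (l+2)) (⟨P, hP1⟩ : Fin (l+1)) (⟨Q, hQ1⟩ : Fin (l+1)) hPQ' a e
    simp only [this]
  · rintro ⟨f, t, j⟩ hy
    simp only [Finset.mem_sigma, Finset.mem_range, Finset.Nat.mem_antidiagonalTuple,
      Finset.mem_product] at hy
    obtain ⟨hf, ht, hj⟩ := hy
    have h1 : bckF l s (⟨Q, hQ2⟩ : Fin (l+2)) (⟨P, hP1⟩ : Fin (l+1)) (⟨Q, hQ1⟩ : Fin (l+1)) t (fwdE l s (⟨Q, hQ2⟩ : Fin (l+2)) (⟨P, hP1⟩ : Fin (l+1)) (⟨Q, hQ1⟩ : Fin (l+1)) f t j) = f :=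
      bckF_fwdE s (⟨Q, hQ2⟩ : Fin (l+2)) (⟨P, hP1⟩ : Fin (l+1)) (⟨Q, hQ1⟩ : Fin (l+1)) hPQ' f t j (by omega) (by omega)
    have h2 : fwdE l s (⟨Q, hQ2⟩ : Fin (l+2)) (⟨P, hP1⟩ : Fin (l+1)) (⟨Q, hQ1⟩ : Fin (l+1)) f t j (⟨Q, hQ2⟩ : Fin (l+2)) = j := ins_same ..
    simp only [h1, h2]
  · rintro ⟨a, e⟩ hx
    dsimp only
    congr 1
    refine List.ext_getElem (by rw [lenR2 _ Q _ _ hQ]; simp) ?_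
    intro n hn1 hn2
    have hn : n < l + 2 := by simp at hn1; omega
    rw [List.getElem_ofFn, getR2 _ Q _ _ _ hQ hn, hK a n hn]
    have He : ∀ (v1 v2 : ℕ) (hv1 : v1 < l+2) (hv2 : v2 < l+2), v1 = v2 →
        e ⟨v1, hv1⟩ = e ⟨v2, hv2⟩ := by
      intro v1 v2 hv1 hv2 h; congr
    have hb : ∀ (k : ℕ) (hk : k < l+1), bckF l s (⟨Q, hQ2⟩ : Fin (l+2)) (⟨P, hP1⟩ : Fin (l+1)) (⟨Q, hQ1⟩ : Fin (l+1)) a e ⟨k, hk⟩ =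
        (if k < Q then e ⟨k, by omega⟩ else e ⟨k+1, by omega⟩) +
          (if k = P then s + a else if k = Q then e ⟨Q, hQ2⟩ else 0) := by
      intro k hk
      rw [bckF_eval _ _ _ _ hPQ']
      rfl
    simp only [hb]
    split_ifs <;>
      first
        | omega
        | (rw [He (n-1+1) n (by omega) (by omega) (by omega)]; omega)
        | (rw [He (Q+1) n (by omega) (by omega) (by omega)]; omega)
        | (rw [He Q n (by omega) (by omega) (by omega)]; omega)
        | (rw [He P n (by omega) (by omega) (by omega)]; omega)
        | (rw [He (P+1) n (by omega) (by omega) (by omega)]; omega)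

noncomputable section

def fwd1 (l : ℕ) (c : Fin (l+2)) (x : ℕ) (P' : Fin (l+1)) (v : ℕ) (f : Fin (l+1) → ℕ) :
    Fin (l+2) → ℕ := ins c x (Function.update f P' v)

def bck1 (l : ℕ) (c : Fin (l+2)) (P' : Fin (l+1)) (w : ℕ) (e : Fin (l+2) → ℕ) :
    Fin (l+1) → ℕ := Function.update (del c e) P' w

lemma sum_fwd1 {l : ℕ} (c : Fin (l+2)) (x : ℕ) (P' : Fin (l+1)) (v : ℕ) (f : Fin (l+1) → ℕ) :
    (∑ i, fwd1 l c x P' v f i) + f P' = x + v + ∑ i, f i := by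
  have h1 : ∑ i : Fin (l+2), fwd1 l c x P' v f i = x + ∑ i, Function.update f P' v i :=
    sum_ins ..
  have h2 := sum_update_nat f P' v
  omega

lemma sum_bck1 {l : ℕ} (c : Fin (l+2)) (P' : Fin (l+1)) (w : ℕ) (e : Fin (l+2) → ℕ) :
    (∑ i, bck1 l c P' w e i) + del c e P' + e c = w + ∑ i : Fin (l+2), e i := by
  have h1 := sum_update_nat (del c e) P' w
  have h2 : e c + ∑ i, del c e i = ∑ i : Fin (l+2), e i := sum_del c e
  unfold bck1
  omega

lemma bck1_eval {l : ℕ} (c : Fin (l+2)) (P' : Fin (l+1)) (w : ℕ) (e : Fin (l+2) → ℕ)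
    (k : ℕ) (hk : k < l+1) :
    bck1 l c P' w e ⟨k, hk⟩ = if k = (P':ℕ) then w
      else if k < (c:ℕ) then e ⟨k, by omega⟩ else e ⟨k+1, by omega⟩ := by
  unfold bck1
  rw [update_val]
  rfl

lemma bck1_same {l : ℕ} (c : Fin (l+2)) (P' : Fin (l+1)) (w : ℕ) (e : Fin (l+2) → ℕ) :
    bck1 l c P' w e P' = w := Function.update_self ..

end

lemma coreD (l s m P : ℕ) (hP : P ≤ l) (hs : 2 ≤ s)
    (KA KB KC : ℕ → List ℕ)
    (hlenA : ∀ a, (KA a).length = l + 2)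
    (hlenB : ∀ a, (KB a).length = l + 2)
    (hlenC : ∀ c, (KC c).length = l + 2)
    (hKA : ∀ a, ∀ i : ℕ, ∀ h : i < l + 2, (KA a)[i]'(by rw [hlenA]; omega) =
      if i = P then 1 else if i = P+1 then s + a + 2 else 2)
    (hKB : ∀ a, ∀ i : ℕ, ∀ h : i < l + 2, (KB a)[i]'(by rw [hlenB]; omega) =
      if i = P then s + a + 1 else 2)
    (hKC : ∀ c, ∀ i : ℕ, ∀ h : i < l + 2, (KC c)[i]'(by rw [hlenC]; omega) =
      if i = P then c + 2 else if i = P+1 then s - c + 1 else 2) :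
    ((∑ a ∈ Finset.range (m + 1), (ohno (m - a) (KA a) + ohno (m - a) (KB a)))
      + ∑ c ∈ Finset.range (s - 1), ohno m (KC c)) =
    ∑ f ∈ Finset.Nat.antidiagonalTuple (l + 1) (m + s),
      ((f ⟨P, by omega⟩ + 1 - s : ℕ) : ℝ) *
        ∑ j ∈ Finset.range (f ⟨P, by omega⟩ + 1),
          mzv ((List.ofFn fun i : Fin (l + 1) => f i + 2).take P ++
            [j + 1, f ⟨P, by omega⟩ - j + 2] ++
            (List.ofFn fun i : Fin (l + 1) => f i + 2).drop (P + 1)) := by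
  have hP1 : P < l + 1 := by omega
  have hPc2 : P < l + 2 := by omega
  have hPc1 : P + 1 < l + 2 := by omega
  -- expand RHS
  have hR : ∀ f ∈ Finset.Nat.antidiagonalTuple (l + 1) (m + s),
      ((f ⟨P, by omega⟩ + 1 - s : ℕ) : ℝ) *
        (∑ j ∈ Finset.range (f ⟨P, by omega⟩ + 1),
          mzv ((List.ofFn fun i : Fin (l + 1) => f i + 2).take P ++
            [j + 1, f ⟨P, by omega⟩ - j + 2] ++
            (List.ofFn fun i : Fin (l + 1) => f i + 2).drop (P + 1))) =
      ∑ x ∈ Finset.range (f ⟨P, hP1⟩ + 1 - s) ×ˢ Finset.range (f ⟨P, hP1⟩ + 1),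
          mzv ((List.ofFn fun i : Fin (l + 1) => f i + 2).take P ++
            [x.2 + 1, f ⟨P, hP1⟩ - x.2 + 2] ++
            (List.ofFn fun i : Fin (l + 1) => f i + 2).drop (P + 1)) := by
    intro f _
    rw [Finset.sum_product]
    dsimp only
    rw [Finset.sum_const, Finset.card_range, nsmul_eq_mul]
  rw [Finset.sum_congr rfl hR, Finset.sum_sigma']
  rw [← Finset.sum_filter_add_sum_filter_not
    ((Finset.Nat.antidiagonalTuple (l + 1) (m + s)).sigma fun f =>
      Finset.range (f ⟨P, hP1⟩ + 1 - s) ×ˢ Finset.range (f ⟨P, hP1⟩ + 1))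
    (fun y => y.2.1 + y.2.2 + s ≤ y.1 ⟨P, hP1⟩)]
  rw [← Finset.sum_filter_add_sum_filter_not
    (((Finset.Nat.antidiagonalTuple (l + 1) (m + s)).sigma fun f =>
      Finset.range (f ⟨P, hP1⟩ + 1 - s) ×ˢ Finset.range (f ⟨P, hP1⟩ + 1)).filter
        (fun y => ¬ (y.2.1 + y.2.2 + s ≤ y.1 ⟨P, hP1⟩)))
    (fun y => y.2.1 + y.2.2 < y.1 ⟨P, hP1⟩)]
  -- expand LHS
  rw [Finset.sum_add_distrib]
  have hLA : (∑ a ∈ Finset.range (m + 1), ohno (m - a) (KA a)) =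
      ∑ a ∈ Finset.range (m + 1), ∑ e ∈ Finset.Nat.antidiagonalTuple (l+2) (m - a),
        mzv (List.ofFn fun i : Fin (l+2) => (KA a)[(i:ℕ)]'(by rw [hlenA]; omega) + e i) :=
    Finset.sum_congr rfl fun a _ => ohno_eq (KA a) (l+2) (m-a) (hlenA a)
  have hLB : (∑ a ∈ Finset.range (m + 1), ohno (m - a) (KB a)) =
      ∑ a ∈ Finset.range (m + 1), ∑ e ∈ Finset.Nat.antidiagonalTuple (l+2) (m - a),
        mzv (List.ofFn fun i : Fin (l+2) => (KB a)[(i:ℕ)]'(by rw [hlenB]; omega) + e i) :=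
    Finset.sum_congr rfl fun a _ => ohno_eq (KB a) (l+2) (m-a) (hlenB a)
  have hLC : (∑ c ∈ Finset.range (s - 1), ohno m (KC c)) =
      ∑ c ∈ Finset.range (s - 1), ∑ e ∈ Finset.Nat.antidiagonalTuple (l+2) m,
        mzv (List.ofFn fun i : Fin (l+2) => (KC c)[(i:ℕ)]'(by rw [hlenC]; omega) + e i) :=
    Finset.sum_congr rfl fun c _ => ohno_eq (KC c) (l+2) m (hlenC c)
  rw [hLA, hLB, hLC, Finset.sum_sigma', Finset.sum_sigma', Finset.sum_sigma']
  have hA : (∑ x ∈ (Finset.range (m + 1)).sigma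
        (fun a => Finset.Nat.antidiagonalTuple (l+2) (m - a)),
        mzv (List.ofFn fun i : Fin (l+2) => (KA x.1)[(i:ℕ)]'(by rw [hlenA]; omega) + x.2 i)) =
      ∑ x ∈ Finset.filter (fun x => x.2.1 + x.2.2 + s ≤ x.1 ⟨P, hP1⟩)
            ((Finset.Nat.antidiagonalTuple (l + 1) (m + s)).sigma fun f =>
              Finset.range (f ⟨P, hP1⟩ + 1 - s) ×ˢ Finset.range (f ⟨P, hP1⟩ + 1)),
        mzv ((List.ofFn fun i : Fin (l + 1) => x.1 i + 2).take P ++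
          [x.2.2 + 1, x.1 ⟨P, hP1⟩ - x.2.2 + 2] ++
          (List.ofFn fun i : Fin (l + 1) => x.1 i + 2).drop (P + 1)) := by
    refine Finset.sum_nbij'
      (fun x => ⟨bck1 l ⟨P, hPc2⟩ ⟨P, hP1⟩
        (x.2 ⟨P, hPc2⟩ + del ⟨P, hPc2⟩ x.2 ⟨P, hP1⟩ + s + x.1) x.2, (x.1, x.2 ⟨P, hPc2⟩)⟩)
      (fun y => ⟨y.2.1, fwd1 l ⟨P, hPc2⟩ y.2.2 ⟨P, hP1⟩
        (y.1 ⟨P, hP1⟩ - y.2.2 - s - y.2.1) y.1⟩) ?_ ?_ ?_ ?_ ?_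
    · rintro ⟨a, e⟩ hx
      simp only [Finset.mem_sigma, Finset.mem_range, Finset.Nat.mem_antidiagonalTuple,
        Finset.mem_product, Finset.mem_filter] at hx ⊢
      obtain ⟨ha, he⟩ := hx
      have hs1 := sum_bck1 (⟨P, hPc2⟩ : Fin (l+2)) (⟨P, hP1⟩ : Fin (l+1))
        (e ⟨P, hPc2⟩ + del ⟨P, hPc2⟩ e ⟨P, hP1⟩ + s + a) e
      have hsame : bck1 l ⟨P, hPc2⟩ ⟨P, hP1⟩
          (e ⟨P, hPc2⟩ + del ⟨P, hPc2⟩ e ⟨P, hP1⟩ + s + a) e ⟨P, hP1⟩ =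
          e ⟨P, hPc2⟩ + del ⟨P, hPc2⟩ e ⟨P, hP1⟩ + s + a := bck1_same ..
      refine ⟨⟨by omega, by omega, by omega⟩, by omega⟩
    · rintro ⟨f, t, j⟩ hy
      simp only [Finset.mem_sigma, Finset.mem_range, Finset.Nat.mem_antidiagonalTuple,
        Finset.mem_product, Finset.mem_filter] at hy ⊢
      obtain ⟨⟨hf, ht, hj⟩, hcA⟩ := hy
      have hfP : f ⟨P, hP1⟩ ≤ ∑ i, f i :=
        Finset.single_le_sum (fun i _ => Nat.zero_le _) (Finset.mem_univ _)
      have hs1 := sum_fwd1 (⟨P, hPc2⟩ : Fin (l+2)) j (⟨P, hP1⟩ : Fin (l+1))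
        (f ⟨P, hP1⟩ - j - s - t) f
      exact ⟨by omega, by omega⟩
    · rintro ⟨a, e⟩ hx
      refine congrArg (Sigma.mk a) ?_
      have hv : bck1 l ⟨P, hPc2⟩ ⟨P, hP1⟩
          (e ⟨P, hPc2⟩ + del ⟨P, hPc2⟩ e ⟨P, hP1⟩ + s + a) e ⟨P, hP1⟩
            - e ⟨P, hPc2⟩ - s - a = del ⟨P, hPc2⟩ e ⟨P, hP1⟩ := by
        rw [bck1_same]; omega
      show fwd1 l ⟨P, hPc2⟩ _ ⟨P, hP1⟩ _ _ = e
      rw [hv]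
      show ins (⟨P, hPc2⟩ : Fin (l+2)) (e ⟨P, hPc2⟩) _ = e
      unfold bck1
      rw [Function.update_idem, Function.update_eq_self, ins_del]
    · rintro ⟨f, t, j⟩ hy
      simp only [Finset.mem_sigma, Finset.mem_range, Finset.Nat.mem_antidiagonalTuple,
        Finset.mem_product, Finset.mem_filter] at hy
      obtain ⟨⟨hf, ht, hj⟩, hcA⟩ := hy
      have hPc' : fwd1 l ⟨P, hPc2⟩ j ⟨P, hP1⟩ (f ⟨P, hP1⟩ - j - s - t) f ⟨P, hPc2⟩ = j :=
        ins_same ..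
      have hdel : del (⟨P, hPc2⟩ : Fin (l+2))
          (fwd1 l ⟨P, hPc2⟩ j ⟨P, hP1⟩ (f ⟨P, hP1⟩ - j - s - t) f) =
          Function.update f ⟨P, hP1⟩ (f ⟨P, hP1⟩ - j - s - t) := del_ins ..
      dsimp only
      unfold bck1
      rw [hPc', hdel, Function.update_self, Function.update_idem,
        show j + (f ⟨P, hP1⟩ - j - s - t) + s + t = f ⟨P, hP1⟩ by omega,
        Function.update_eq_self]
    · rintro ⟨a, e⟩ hx
      dsimp only
      congr 1
      refine List.ext_getElem (by simp; omega) ?_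
      intro n hn1 hn2
      have hn : n < l + 2 := by simp at hn1; omega
      rw [List.getElem_ofFn, hKA a n hn, getR2 _ P _ _ n (by omega) hn]
      have He : ∀ (v1 v2 : ℕ) (hv1 : v1 < l + 2) (hv2 : v2 < l + 2), v1 = v2 →
          e ⟨v1, hv1⟩ = e ⟨v2, hv2⟩ := by intro v1 v2 hv1 hv2 h; congr
      have hdelP : del (⟨P, hPc2⟩ : Fin (l+2)) e ⟨P, hP1⟩ = e ⟨P+1, hPc1⟩ := by
        unfold del; rw [dif_neg (Nat.lt_irrefl P)]
      simp only [bck1_eval, hdelP]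
      split_ifs <;>
        first
          | omega
          | (rw [He (n-1+1) n (by omega) (by omega) (by omega)]; omega)
          | (rw [He P n (by omega) (by omega) (by omega)]; omega)
          | (rw [He (P+1) n (by omega) (by omega) (by omega)]; omega)
  have hC : (∑ x ∈ (Finset.range (s - 1)).sigma
        (fun _ => Finset.Nat.antidiagonalTuple (l+2) m),
        mzv (List.ofFn fun i : Fin (l+2) => (KC x.1)[(i:ℕ)]'(by rw [hlenC]; omega) + x.2 i)) =
      ∑ x ∈ Finset.filter (fun x => x.2.1 + x.2.2 < x.1 ⟨P, hP1⟩)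
            (Finset.filter (fun y => ¬ (y.2.1 + y.2.2 + s ≤ y.1 ⟨P, hP1⟩))
              ((Finset.Nat.antidiagonalTuple (l + 1) (m + s)).sigma fun f =>
                Finset.range (f ⟨P, hP1⟩ + 1 - s) ×ˢ Finset.range (f ⟨P, hP1⟩ + 1))),
        mzv ((List.ofFn fun i : Fin (l + 1) => x.1 i + 2).take P ++
          [x.2.2 + 1, x.1 ⟨P, hP1⟩ - x.2.2 + 2] ++
          (List.ofFn fun i : Fin (l + 1) => x.1 i + 2).drop (P + 1)) := by
    refine Finset.sum_nbij'
      (fun x => ⟨bck1 l ⟨P+1, hPc1⟩ ⟨P, hP1⟩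
          (del ⟨P+1, hPc1⟩ x.2 ⟨P, hP1⟩ + x.2 ⟨P+1, hPc1⟩ + s) x.2,
        (x.2 ⟨P+1, hPc1⟩, del ⟨P+1, hPc1⟩ x.2 ⟨P, hP1⟩ + x.1 + 1)⟩)
      (fun y => ⟨y.2.1 + y.2.2 + s - y.1 ⟨P, hP1⟩ - 1,
        fwd1 l ⟨P+1, hPc1⟩ y.2.1 ⟨P, hP1⟩ (y.1 ⟨P, hP1⟩ - s - y.2.1) y.1⟩) ?_ ?_ ?_ ?_ ?_
    · rintro ⟨c, e⟩ hx
      simp only [Finset.mem_sigma, Finset.mem_range, Finset.Nat.mem_antidiagonalTuple,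
        Finset.mem_product, Finset.mem_filter] at hx ⊢
      obtain ⟨hc, he⟩ := hx
      have hs1 := sum_bck1 (⟨P+1, hPc1⟩ : Fin (l+2)) (⟨P, hP1⟩ : Fin (l+1))
        (del ⟨P+1, hPc1⟩ e ⟨P, hP1⟩ + e ⟨P+1, hPc1⟩ + s) e
      have hsame : bck1 l ⟨P+1, hPc1⟩ ⟨P, hP1⟩
          (del ⟨P+1, hPc1⟩ e ⟨P, hP1⟩ + e ⟨P+1, hPc1⟩ + s) e ⟨P, hP1⟩ =
          del ⟨P+1, hPc1⟩ e ⟨P, hP1⟩ + e ⟨P+1, hPc1⟩ + s := bck1_same ..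
      exact ⟨⟨⟨by omega, by omega, by omega⟩, by omega⟩, by omega⟩
    · rintro ⟨f, t, j⟩ hy
      simp only [Finset.mem_sigma, Finset.mem_range, Finset.Nat.mem_antidiagonalTuple,
        Finset.mem_product, Finset.mem_filter] at hy ⊢
      obtain ⟨⟨⟨hf, ht, hj⟩, hcA⟩, hcC⟩ := hy
      have hfP : f ⟨P, hP1⟩ ≤ ∑ i, f i :=
        Finset.single_le_sum (fun i _ => Nat.zero_le _) (Finset.mem_univ _)
      have hs1 := sum_fwd1 (⟨P+1, hPc1⟩ : Fin (l+2)) t (⟨P, hP1⟩ : Fin (l+1))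
        (f ⟨P, hP1⟩ - s - t) f
      exact ⟨by omega, by omega⟩
    · rintro ⟨c, e⟩ hx
      simp only [Finset.mem_sigma, Finset.mem_range, Finset.Nat.mem_antidiagonalTuple] at hx
      obtain ⟨hc, he⟩ := hx
      dsimp only
      have hsame : bck1 l ⟨P+1, hPc1⟩ ⟨P, hP1⟩
          (del ⟨P+1, hPc1⟩ e ⟨P, hP1⟩ + e ⟨P+1, hPc1⟩ + s) e ⟨P, hP1⟩ =
          del ⟨P+1, hPc1⟩ e ⟨P, hP1⟩ + e ⟨P+1, hPc1⟩ + s := bck1_same ..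
      rw [hsame]
      simp only [Sigma.ext_iff, heq_eq_eq]
      refine ⟨by omega, ?_⟩
      rw [show del ⟨P+1, hPc1⟩ e ⟨P, hP1⟩ + e ⟨P+1, hPc1⟩ + s - s - e ⟨P+1, hPc1⟩
        = del ⟨P+1, hPc1⟩ e ⟨P, hP1⟩ from by omega]
      show ins (⟨P+1, hPc1⟩ : Fin (l+2)) (e ⟨P+1, hPc1⟩) _ = e
      unfold bck1
      rw [Function.update_idem, Function.update_eq_self]
      exact ins_del ..
    · rintro ⟨f, t, j⟩ hy
      simp only [Finset.mem_sigma, Finset.mem_range, Finset.Nat.mem_antidiagonalTuple,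
        Finset.mem_product, Finset.mem_filter] at hy
      obtain ⟨⟨⟨hf, ht, hj⟩, hcA⟩, hcC⟩ := hy
      have hPc' : fwd1 l ⟨P+1, hPc1⟩ t ⟨P, hP1⟩ (f ⟨P, hP1⟩ - s - t) f ⟨P+1, hPc1⟩ = t :=
        ins_same ..
      have hdel : del (⟨P+1, hPc1⟩ : Fin (l+2))
          (fwd1 l ⟨P+1, hPc1⟩ t ⟨P, hP1⟩ (f ⟨P, hP1⟩ - s - t) f) =
          Function.update f ⟨P, hP1⟩ (f ⟨P, hP1⟩ - s - t) := del_ins ..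
      dsimp only
      unfold bck1
      rw [hPc', hdel, Function.update_self, Function.update_idem]
      simp only [Sigma.ext_iff, heq_eq_eq, Prod.mk.injEq]
      refine ⟨?_, trivial, by omega⟩
      rw [show f ⟨P, hP1⟩ - s - t + t + s = f ⟨P, hP1⟩ from by omega,
        Function.update_eq_self]
    · rintro ⟨c, e⟩ hx
      simp only [Finset.mem_sigma, Finset.mem_range, Finset.Nat.mem_antidiagonalTuple] at hx
      obtain ⟨hc, he⟩ := hx
      dsimp only
      congr 1
      refine List.ext_getElem (by simp; omega) ?_
      intro n hn1 hn2
      have hn : n < l + 2 := by simp at hn1; omega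
      rw [List.getElem_ofFn, hKC c n hn, getR2 _ P _ _ n (by omega) hn]
      have He : ∀ (v1 v2 : ℕ) (hv1 : v1 < l + 2) (hv2 : v2 < l + 2), v1 = v2 →
          e ⟨v1, hv1⟩ = e ⟨v2, hv2⟩ := by intro v1 v2 hv1 hv2 h; congr
      have hdelP : del (⟨P+1, hPc1⟩ : Fin (l+2)) e ⟨P, hP1⟩ = e ⟨P, hPc2⟩ := by
        unfold del; rw [dif_pos (Nat.lt_succ_self P)]
      simp only [bck1_eval, hdelP]
      split_ifs <;>
        first
          | omega
          | (rw [He (n-1+1) n (by omega) (by omega) (by omega)]; omega)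
          | (rw [He P n (by omega) (by omega) (by omega)]; omega)
          | (rw [He (P+1) n (by omega) (by omega) (by omega)]; omega)
  have hB : (∑ x ∈ (Finset.range (m + 1)).sigma
        (fun a => Finset.Nat.antidiagonalTuple (l+2) (m - a)),
        mzv (List.ofFn fun i : Fin (l+2) => (KB x.1)[(i:ℕ)]'(by rw [hlenB]; omega) + x.2 i)) =
      ∑ x ∈ Finset.filter (fun x => ¬ (x.2.1 + x.2.2 < x.1 ⟨P, hP1⟩))
            (Finset.filter (fun y => ¬ (y.2.1 + y.2.2 + s ≤ y.1 ⟨P, hP1⟩))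
              ((Finset.Nat.antidiagonalTuple (l + 1) (m + s)).sigma fun f =>
                Finset.range (f ⟨P, hP1⟩ + 1 - s) ×ˢ Finset.range (f ⟨P, hP1⟩ + 1))),
        mzv ((List.ofFn fun i : Fin (l + 1) => x.1 i + 2).take P ++
          [x.2.2 + 1, x.1 ⟨P, hP1⟩ - x.2.2 + 2] ++
          (List.ofFn fun i : Fin (l + 1) => x.1 i + 2).drop (P + 1)) := by
    refine Finset.sum_nbij'
      (fun x => ⟨bck1 l ⟨P+1, hPc1⟩ ⟨P, hP1⟩
          (del ⟨P+1, hPc1⟩ x.2 ⟨P, hP1⟩ + x.2 ⟨P+1, hPc1⟩ + s + x.1) x.2,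
        (x.1 + x.2 ⟨P+1, hPc1⟩, s + x.1 + del ⟨P+1, hPc1⟩ x.2 ⟨P, hP1⟩)⟩)
      (fun y => ⟨y.2.1 + y.2.2 - y.1 ⟨P, hP1⟩,
        fwd1 l ⟨P+1, hPc1⟩ (y.1 ⟨P, hP1⟩ - y.2.2) ⟨P, hP1⟩
          (y.1 ⟨P, hP1⟩ - s - y.2.1) y.1⟩) ?_ ?_ ?_ ?_ ?_
    · rintro ⟨a, e⟩ hx
      simp only [Finset.mem_sigma, Finset.mem_range, Finset.Nat.mem_antidiagonalTuple,
        Finset.mem_product, Finset.mem_filter] at hx ⊢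
      obtain ⟨ha, he⟩ := hx
      have hs1 := sum_bck1 (⟨P+1, hPc1⟩ : Fin (l+2)) (⟨P, hP1⟩ : Fin (l+1))
        (del ⟨P+1, hPc1⟩ e ⟨P, hP1⟩ + e ⟨P+1, hPc1⟩ + s + a) e
      have hsame : bck1 l ⟨P+1, hPc1⟩ ⟨P, hP1⟩
          (del ⟨P+1, hPc1⟩ e ⟨P, hP1⟩ + e ⟨P+1, hPc1⟩ + s + a) e ⟨P, hP1⟩ =
          del ⟨P+1, hPc1⟩ e ⟨P, hP1⟩ + e ⟨P+1, hPc1⟩ + s + a := bck1_same ..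
      exact ⟨⟨⟨by omega, by omega, by omega⟩, by omega⟩, by omega⟩
    · rintro ⟨f, t, j⟩ hy
      simp only [Finset.mem_sigma, Finset.mem_range, Finset.Nat.mem_antidiagonalTuple,
        Finset.mem_product, Finset.mem_filter] at hy ⊢
      obtain ⟨⟨⟨hf, ht, hj⟩, hcA⟩, hcC⟩ := hy
      have hfP : f ⟨P, hP1⟩ ≤ ∑ i, f i :=
        Finset.single_le_sum (fun i _ => Nat.zero_le _) (Finset.mem_univ _)
      have hs1 := sum_fwd1 (⟨P+1, hPc1⟩ : Fin (l+2)) (f ⟨P, hP1⟩ - j) (⟨P, hP1⟩ : Fin (l+1))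
        (f ⟨P, hP1⟩ - s - t) f
      exact ⟨by omega, by omega⟩
    · rintro ⟨a, e⟩ hx
      simp only [Finset.mem_sigma, Finset.mem_range, Finset.Nat.mem_antidiagonalTuple] at hx
      obtain ⟨ha, he⟩ := hx
      dsimp only
      have hsame : bck1 l ⟨P+1, hPc1⟩ ⟨P, hP1⟩
          (del ⟨P+1, hPc1⟩ e ⟨P, hP1⟩ + e ⟨P+1, hPc1⟩ + s + a) e ⟨P, hP1⟩ =
          del ⟨P+1, hPc1⟩ e ⟨P, hP1⟩ + e ⟨P+1, hPc1⟩ + s + a := bck1_same ..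
      rw [hsame]
      simp only [Sigma.ext_iff, heq_eq_eq]
      refine ⟨by omega, ?_⟩
      rw [show del ⟨P+1, hPc1⟩ e ⟨P, hP1⟩ + e ⟨P+1, hPc1⟩ + s + a
          - (s + a + del ⟨P+1, hPc1⟩ e ⟨P, hP1⟩) = e ⟨P+1, hPc1⟩ from by omega,
        show del ⟨P+1, hPc1⟩ e ⟨P, hP1⟩ + e ⟨P+1, hPc1⟩ + s + a - s - (a + e ⟨P+1, hPc1⟩)
          = del ⟨P+1, hPc1⟩ e ⟨P, hP1⟩ from by omega]
      show ins (⟨P+1, hPc1⟩ : Fin (l+2)) (e ⟨P+1, hPc1⟩) _ = e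
      unfold bck1
      rw [Function.update_idem, Function.update_eq_self]
      exact ins_del ..
    · rintro ⟨f, t, j⟩ hy
      simp only [Finset.mem_sigma, Finset.mem_range, Finset.Nat.mem_antidiagonalTuple,
        Finset.mem_product, Finset.mem_filter] at hy
      obtain ⟨⟨⟨hf, ht, hj⟩, hcA⟩, hcC⟩ := hy
      have hPc' : fwd1 l ⟨P+1, hPc1⟩ (f ⟨P, hP1⟩ - j) ⟨P, hP1⟩
          (f ⟨P, hP1⟩ - s - t) f ⟨P+1, hPc1⟩ = f ⟨P, hP1⟩ - j := ins_same ..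
      have hdel : del (⟨P+1, hPc1⟩ : Fin (l+2))
          (fwd1 l ⟨P+1, hPc1⟩ (f ⟨P, hP1⟩ - j) ⟨P, hP1⟩ (f ⟨P, hP1⟩ - s - t) f) =
          Function.update f ⟨P, hP1⟩ (f ⟨P, hP1⟩ - s - t) := del_ins ..
      dsimp only
      unfold bck1
      rw [hPc', hdel, Function.update_self, Function.update_idem]
      simp only [Sigma.ext_iff, heq_eq_eq, Prod.mk.injEq]
      refine ⟨?_, by omega, by omega⟩
      rw [show f ⟨P, hP1⟩ - s - t + (f ⟨P, hP1⟩ - j) + s + (t + j - f ⟨P, hP1⟩)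
          = f ⟨P, hP1⟩ from by omega, Function.update_eq_self]
    · rintro ⟨a, e⟩ hx
      dsimp only
      congr 1
      refine List.ext_getElem (by simp; omega) ?_
      intro n hn1 hn2
      have hn : n < l + 2 := by simp at hn1; omega
      rw [List.getElem_ofFn, hKB a n hn, getR2 _ P _ _ n (by omega) hn]
      have He : ∀ (v1 v2 : ℕ) (hv1 : v1 < l + 2) (hv2 : v2 < l + 2), v1 = v2 →
          e ⟨v1, hv1⟩ = e ⟨v2, hv2⟩ := by intro v1 v2 hv1 hv2 h; congr
      have hdelP : del (⟨P+1, hPc1⟩ : Fin (l+2)) e ⟨P, hP1⟩ = e ⟨P, hPc2⟩ := by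
        unfold del; rw [dif_pos (Nat.lt_succ_self P)]
      simp only [bck1_eval, hdelP]
      split_ifs <;>
        first
          | omega
          | (rw [He (n-1+1) n (by omega) (by omega) (by omega)]; omega)
          | (rw [He P n (by omega) (by omega) (by omega)]; omega)
          | (rw [He (P+1) n (by omega) (by omega) (by omega)]; omega)
  rw [hA, hB, hC]
  ring

/-- For integers `l ≥ 1`, `s ≥ 2`, `m ≥ 0`, and `1 ≤ p, q ≤ l+1`, one has
`I_{p,q} = J_{p,q}`, where
`I_{p,q} = Σ_{a=0}^{m} O_{m−a}({2}^{p−1}, s+a+2, {2}^{q−p−1}, 1, {2}^{l−q+2})` if `p < q`,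
`I_{p,q} = Σ_{a=0}^{m} ( O_{m−a}({2}^{p−1}, 1, s+a+2, {2}^{l−p+1})
  + O_{m−a}({2}^{p−1}, s+a+1, {2}^{l−p+2}) )
  + Σ_{j=0}^{s−2} O_m({2}^{p−1}, j+2, s−j+1, {2}^{l−p+1})` if `p = q`,
`I_{p,q} = Σ_{a=0}^{m} O_{m−a}({2}^{q−1}, 1, {2}^{p−q}, s+a+2, {2}^{l−p+1})` if `p > q`, and
`J_{p,q} = Σ_{m₁+⋯+m_{l+1}=m+s} max{m_p−s+1, 0} ·
  Σ_{j=0}^{m_q} ζ(m₁+2, …, m_{q−1}+2, j+1, m_q−j+2, m_{q+1}+2, …, m_{l+1}+2)`. -/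
theorem statement11 (l s m p q : ℕ) (hl : 1 ≤ l) (hs : 2 ≤ s)
    (hp : 1 ≤ p) (hp' : p ≤ l + 1) (hq : 1 ≤ q) (hq' : q ≤ l + 1) :
    (if p < q then
        ∑ a ∈ Finset.range (m + 1),
          ohno (m - a) (List.replicate (p - 1) 2 ++ [s + a + 2] ++
            List.replicate (q - p - 1) 2 ++ [1] ++ List.replicate (l + 2 - q) 2)
      else if p = q then
        (∑ a ∈ Finset.range (m + 1),
          (ohno (m - a) (List.replicate (p - 1) 2 ++ [1, s + a + 2] ++
              List.replicate (l + 1 - p) 2)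
            + ohno (m - a) (List.replicate (p - 1) 2 ++ [s + a + 1] ++
                List.replicate (l + 2 - p) 2)))
        + ∑ j ∈ Finset.range (s - 1),
            ohno m (List.replicate (p - 1) 2 ++ [j + 2, s - j + 1] ++
              List.replicate (l + 1 - p) 2)
      else
        ∑ a ∈ Finset.range (m + 1),
          ohno (m - a) (List.replicate (q - 1) 2 ++ [1] ++
            List.replicate (p - q) 2 ++ [s + a + 2] ++ List.replicate (l + 1 - p) 2))
    = ∑ f ∈ Finset.Nat.antidiagonalTuple (l + 1) (m + s),
        ((f ⟨p - 1, by omega⟩ + 1 - s : ℕ) : ℝ) *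
          ∑ j ∈ Finset.range (f ⟨q - 1, by omega⟩ + 1),
            mzv ((List.ofFn fun i : Fin (l + 1) => f i + 2).take (q - 1) ++
              [j + 1, f ⟨q - 1, by omega⟩ - j + 2] ++
              (List.ofFn fun i : Fin (l + 1) => f i + 2).drop q) := by
  rcases Nat.lt_trichotomy p q with hlt | heq | hgt
  · rw [if_pos hlt]
    have h := core l s m (p-1) (q-1) (by omega) (by omega) (by omega) hs
      (fun a => List.replicate (p - 1) 2 ++ [s + a + 2] ++
        List.replicate (q - p - 1) 2 ++ [1] ++ List.replicate (l + 2 - q) 2)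
      (fun a => by simp; omega)
      (fun a i h => by
        rw [get5 (p-1) (q-p-1) (l+2-q) (s+a+2) 1 i (by omega)]
        split_ifs <;> omega)
    rw [show q - 1 + 1 = q from by omega] at h
    exact h
  · rw [if_neg (by omega), if_pos heq]
    subst heq
    have h := coreD l s m (p-1) (by omega) hs
      (fun a => List.replicate (p - 1) 2 ++ [1, s + a + 2] ++ List.replicate (l + 1 - p) 2)
      (fun a => List.replicate (p - 1) 2 ++ [s + a + 1] ++ List.replicate (l + 2 - p) 2)
      (fun c => List.replicate (p - 1) 2 ++ [c + 2, s - c + 1] ++ List.replicate (l + 1 - p) 2)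
      (fun a => by simp; omega)
      (fun a => by simp; omega)
      (fun c => by simp; omega)
      (fun a i h => by
        rw [get4 (p-1) (l+1-p) 1 (s+a+2) i (by omega)]
        split_ifs <;> omega)
      (fun a i h => by
        rw [get3 (p-1) (l+2-p) (s+a+1) i (by omega)]
        split_ifs <;> omega)
      (fun c i h => by
        rw [get4 (p-1) (l+1-p) (c+2) (s-c+1) i (by omega)]
        split_ifs <;> omega)
    rw [show p - 1 + 1 = p from by omega] at h
    exact h
  · rw [if_neg (by omega), if_neg (by omega)]
    have h := core l s m (p-1) (q-1) (by omega) (by omega) (by omega) hs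
      (fun a => List.replicate (q - 1) 2 ++ [1] ++
        List.replicate (p - q) 2 ++ [s + a + 2] ++ List.replicate (l + 1 - p) 2)
      (fun a => by simp; omega)
      (fun a i h => by
        rw [get5 (q-1) (p-q) (l+1-p) 1 (s+a+2) i (by omega)]
        split_ifs <;> omega)
    rw [show q - 1 + 1 = q from by omega] at h
    exact h
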